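/- Let X be a Banach space and suppose X has property U in X** and X* is strictly convex. Then every closed subspace Y of X has property U in X** (i.e., X is totally smooth in its bidual). Conversely, if every closed subspace of X has property U in X**, then X* is strictly convex and X has property U in X**. -/

import Mathlib

open NormedSpace

noncomputable instance {X : Type*} [SeminormedAddCommGroup X] [NormedSpace ℝ X] :
    SeminormedAddCommGroup (StrongDual ℝ (StrongDual ℝ X)) :=
  ContinuousLinearMap.toSeminormedAddCommGroup

noncomputable instance {X : Type*} [SeminormedAddCommGroup X] [NormedSpace ℝ X] :
    NormedSpace ℝ (StrongDual ℝ (StrongDual ℝ X)) :=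
  ContinuousLinearMap.toNormedSpace

/-- The adjoint `T* : X* → Y*` of a bounded operator `T : Y → X`. -/
noncomputable def adj {Y X : Type*} [SeminormedAddCommGroup Y] [NormedSpace ℝ Y]
    [SeminormedAddCommGroup X] [NormedSpace ℝ X] (T : Y →L[ℝ] X) :
    StrongDual ℝ X →L[ℝ] StrongDual ℝ Y :=
  LinearMap.mkContinuous
    { toFun := fun f => f.comp T
      map_add' := fun f g => by ext y; simp
      map_smul' := fun c f => by ext y; simp }
    ‖T‖ (fun f => by simpa [mul_comm] using f.opNorm_comp_le T)

/-- The natural projection `π_X : X*** → X***` onto `X*`. -/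
noncomputable def piX (X : Type*) [SeminormedAddCommGroup X] [NormedSpace ℝ X] :
    StrongDual ℝ (StrongDual ℝ (StrongDual ℝ X)) →L[ℝ] StrongDual ℝ (StrongDual ℝ (StrongDual ℝ X)) :=
  (inclusionInDoubleDual ℝ (StrongDual ℝ X)).comp (adj (inclusionInDoubleDual ℝ X))

/-- The triple adjoint `T*** : X*** → Y***` of `T : Y → X`. -/
noncomputable def adj3 {Y X : Type*} [SeminormedAddCommGroup Y] [NormedSpace ℝ Y]
    [SeminormedAddCommGroup X] [NormedSpace ℝ X] (T : Y →L[ℝ] X) :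
    StrongDual ℝ (StrongDual ℝ (StrongDual ℝ X)) →L[ℝ] StrongDual ℝ (StrongDual ℝ (StrongDual ℝ Y)) :=
  adj (adj (adj T))

section Aux

variable {X : Type*} [NormedAddCommGroup X] [NormedSpace ℝ X]

/-- If `f` extends `g` then `‖g‖ ≤ ‖f‖`. -/
lemma aux_norm_restrict_le (Y : Subspace ℝ X) (g : StrongDual ℝ Y) (f : StrongDual ℝ X)
    (h : ∀ y : Y, f y = g y) : ‖g‖ ≤ ‖f‖ := by
  refine g.opNorm_le_bound (norm_nonneg f) fun y => ?_
  rw [← h y]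
  exact f.le_opNorm (y : X)

/-- Taylor–Foguel, easy direction: if `X*` is strictly convex then norm-preserving
extensions from subspaces to `X` are unique. -/
lemma aux_unique_ext [StrictConvexSpace ℝ (StrongDual ℝ X)] (Y : Subspace ℝ X) (g : StrongDual ℝ Y)
    (f₁ f₂ : StrongDual ℝ X) (h₁ : ∀ y : Y, f₁ y = g y) (n₁ : ‖f₁‖ = ‖g‖)
    (h₂ : ∀ y : Y, f₂ y = g y) (n₂ : ‖f₂‖ = ‖g‖) : f₁ = f₂ := by
  by_cases hg : g = 0
  · rw [hg, ContinuousLinearMap.opNorm_zero, norm_eq_zero] at n₁ n₂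
    rw [n₁, n₂]
  · have hge : 2 * ‖g‖ ≤ ‖f₁ + f₂‖ := by
      have : ‖(2 : ℝ) • g‖ ≤ ‖f₁ + f₂‖ := by
        refine aux_norm_restrict_le Y ((2 : ℝ) • g) (f₁ + f₂) fun y => ?_
        simp [h₁ y, h₂ y, two_mul]
      have h2 := ContinuousLinearMap.opNorm_smul_le (1/2 : ℝ) ((2:ℝ) • g)
      rw [smul_smul] at h2; norm_num at h2; linarith
    have hsum : ‖f₁ + f₂‖ = ‖f₁‖ + ‖f₂‖ := by
      refine le_antisymm (norm_add_le _ _) ?_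
      rw [n₁, n₂]; linarith
    exact eq_of_norm_eq_of_norm_add_eq (n₁.trans n₂.symm) hsum

end Aux

set_option maxHeartbeats 1000000 in
/-- `X` is totally smooth in its bidual (every closed subspace of `X` has property U in
`X**`) iff `X` has property U in `X**` and `X*` is strictly convex. -/
theorem totally_smooth_iff_property_U_and_strictly_convex_dual
    {X : Type*} [NormedAddCommGroup X] [NormedSpace ℝ X] [CompleteSpace X] :
    ((∀ f : StrongDual ℝ X, ∃! F : StrongDual ℝ (StrongDual ℝ (StrongDual ℝ X)),
        (∀ x : X, F (inclusionInDoubleDual ℝ X x) = f x) ∧ ‖F‖ = ‖f‖) ∧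
      StrictConvexSpace ℝ (StrongDual ℝ X)) ↔
    (∀ Y : Subspace ℝ X, IsClosed (Y : Set X) →
      ∀ g : StrongDual ℝ Y, ∃! F : StrongDual ℝ (StrongDual ℝ (StrongDual ℝ X)),
        (∀ y : Y, F (inclusionInDoubleDual ℝ X (y : X)) = g y) ∧ ‖F‖ = ‖g‖) := by
  constructor
  · rintro ⟨hU, hSC⟩ Y _ g
    obtain ⟨f, hf, hnf⟩ := exists_extension_norm_eq Y g
    obtain ⟨F, ⟨hF, hnF⟩, hFu⟩ := hU f
    refine ⟨F, ⟨fun y => by rw [hF, hf], by rw [hnF, hnf]⟩, ?_⟩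
    rintro F' ⟨hF', hnF'⟩
    set f' : StrongDual ℝ X := F'.comp (inclusionInDoubleDual ℝ X) with hf'def
    have hf'app : ∀ x : X, f' x = F' (inclusionInDoubleDual ℝ X x) := fun x => rfl
    have hext : ∀ y : Y, f' y = g y := fun y => (hf'app _).trans (hF' y)
    have hnorm_le : ‖f'‖ ≤ ‖g‖ := by
      calc ‖f'‖ ≤ ‖F'‖ * ‖inclusionInDoubleDual ℝ X‖ := F'.opNorm_comp_le _
        _ ≤ ‖F'‖ * 1 := by
            gcongr
            exact inclusionInDoubleDual_norm_le ℝ X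
        _ = ‖g‖ := by rw [mul_one, hnF']
    have hnorm : ‖f'‖ = ‖g‖ := le_antisymm hnorm_le (aux_norm_restrict_le Y g f' hext)
    have hff : f' = f := aux_unique_ext Y g f' f hext hnorm hf hnf
    refine hFu F' ⟨fun x => by rw [← hf'app x, hff], ?_⟩
    rw [hnF', ← hnf]
  · intro h
    constructor
    · -- property U of X in X**, from the subspace Y = ⊤
      intro f
      have hT : IsClosed ((⊤ : Subspace ℝ X) : Set X) := by
        simp [Submodule.top_coe]
      set g : StrongDual ℝ (⊤ : Subspace ℝ X) := f.comp (⊤ : Subspace ℝ X).subtypeL with hgdef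
      have hgapp : ∀ y : (⊤ : Subspace ℝ X), g y = f (y : X) := fun y => rfl
      have hng : ‖g‖ = ‖f‖ := by
        refine le_antisymm (aux_norm_restrict_le ⊤ g f fun y => (hgapp y).symm) ?_
        refine f.opNorm_le_bound (norm_nonneg g) fun x => ?_
        have := g.le_opNorm (⟨x, trivial⟩ : (⊤ : Subspace ℝ X))
        simpa [hgapp] using this
      obtain ⟨F, ⟨hF, hnF⟩, hFu⟩ := h ⊤ hT g
      refine ⟨F, ⟨fun x => by simpa [hgapp] using hF ⟨x, trivial⟩, hnF.trans hng⟩, ?_⟩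
      rintro F' ⟨hF', hnF'⟩
      exact hFu F' ⟨fun y => by rw [hF' (y : X), hgapp], hnF'.trans hng.symm⟩
    · -- strict convexity of X*
      refine StrictConvexSpace.of_norm_add_ne_two fun f₁ f₂ h1 h2 hne habs => ?_
      set φ : StrongDual ℝ X := f₁ - f₂ with hφdef
      have hφ : φ ≠ 0 := sub_ne_zero.mpr hne
      obtain ⟨x₀, hx₀⟩ : ∃ x, φ x ≠ 0 := by
        by_contra h'
        push_neg at h'
        exact hφ (ContinuousLinearMap.ext fun x => by simp [h' x])
      set z : X := (φ x₀)⁻¹ • x₀ with hzdef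
      have hz : φ z = 1 := by
        simp [hzdef, map_smul, smul_eq_mul, inv_mul_cancel₀ hx₀]
      set Y : Subspace ℝ X := LinearMap.ker (φ : X →ₗ[ℝ] ℝ) with hYdef
      have hYc : IsClosed (Y : Set X) := ContinuousLinearMap.isClosed_ker φ
      set g : StrongDual ℝ Y := f₁.comp Y.subtypeL with hgdef
      have hgapp : ∀ y : Y, g y = f₁ (y : X) := fun y => rfl
      have hy2 : ∀ y : Y, f₂ (y : X) = g y := by
        intro y
        have hker : φ (y : X) = 0 := LinearMap.mem_ker.mp y.2
        rw [hφdef, ContinuousLinearMap.sub_apply, sub_eq_zero] at hker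
        rw [hgapp, hker]
      have hgle : ‖g‖ ≤ 1 := by
        rw [← h1]
        exact aux_norm_restrict_le Y g f₁ fun y => (hgapp y).symm
      have hgge : 1 ≤ ‖g‖ := by
        refine le_of_forall_pos_le_add fun δ hδ => ?_
        set C : ℝ := 1 + 2 * |f₁ z| + 2 * ‖z‖ with hCdef
        have hC : 0 < C := by positivity
        set ε : ℝ := min (δ / C) 1 with hεdef
        have hε : 0 < ε := lt_min (div_pos hδ hC) one_pos
        have hε1 : ε ≤ 1 := min_le_right _ _
        obtain ⟨x, hx1, hx2⟩ : ∃ x : X, ‖x‖ < 1 ∧ 2 - ε < (f₁ + f₂) x := by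
          obtain ⟨x, hx1, hx2⟩ := (f₁ + f₂).exists_lt_apply_of_lt_opNorm
            (r := 2 - ε) (by rw [habs]; linarith)
          rcases le_or_gt 0 ((f₁ + f₂) x) with hpos | hneg
          · exact ⟨x, hx1, by rwa [Real.norm_eq_abs, abs_of_nonneg hpos] at hx2⟩
          · refine ⟨-x, by simpa using hx1, ?_⟩
            rw [map_neg]
            rwa [Real.norm_eq_abs, abs_of_neg hneg] at hx2
        have hf1x : f₁ x ≤ 1 := by
          have := f₁.le_opNorm x
          rw [h1, one_mul] at this
          have := le_abs_self (f₁ x)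
          have hax : |f₁ x| ≤ 1 := by
            rw [← Real.norm_eq_abs]
            calc ‖f₁ x‖ ≤ ‖f₁‖ * ‖x‖ := f₁.le_opNorm x
              _ ≤ 1 * 1 := by rw [h1]; nlinarith [norm_nonneg x]
              _ = 1 := one_mul 1
          linarith [le_abs_self (f₁ x)]
        have hf2x : f₂ x ≤ 1 := by
          have hax : |f₂ x| ≤ 1 := by
            rw [← Real.norm_eq_abs]
            calc ‖f₂ x‖ ≤ ‖f₂‖ * ‖x‖ := f₂.le_opNorm x
              _ ≤ 1 * 1 := by rw [h2]; nlinarith [norm_nonneg x]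
              _ = 1 := one_mul 1
          linarith [le_abs_self (f₂ x)]
        have hsum : 2 - ε < f₁ x + f₂ x := by
          simpa using hx2
        have hφx : |φ x| < ε := by
          have : φ x = f₁ x - f₂ x := by simp [hφdef]
          rw [this, abs_lt]
          constructor <;> linarith
        set y : X := x - φ x • z with hydef
        have hyY : y ∈ Y := by
          have : φ y = 0 := by
            simp [hydef, map_sub, map_smul, smul_eq_mul, hz]
          simpa [hYdef, LinearMap.mem_ker] using this
        have hny : ‖y‖ ≤ 1 + ε * ‖z‖ := by
          calc ‖y‖ ≤ ‖x‖ + ‖φ x • z‖ := norm_sub_le _ _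
            _ ≤ 1 + ε * ‖z‖ := by
                rw [norm_smul, Real.norm_eq_abs]
                have : |φ x| * ‖z‖ ≤ ε * ‖z‖ := by
                  gcongr
                linarith
        have hf1y : 1 - ε * (1 + |f₁ z|) ≤ f₁ y := by
          have heq : f₁ y = f₁ x - φ x * f₁ z := by
            simp [hydef, map_sub, map_smul, smul_eq_mul]
          have hb : φ x * f₁ z ≤ ε * |f₁ z| := by
            calc φ x * f₁ z ≤ |φ x * f₁ z| := le_abs_self _
              _ = |φ x| * |f₁ z| := abs_mul _ _
              _ ≤ ε * |f₁ z| := by gcongr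
          rw [heq]
          nlinarith
        have hkey : f₁ y ≤ ‖g‖ * ‖y‖ := by
          have hle := g.le_opNorm (⟨y, hyY⟩ : Y)
          have hval : g (⟨y, hyY⟩ : Y) = f₁ y := hgapp _
          calc f₁ y ≤ |f₁ y| := le_abs_self _
            _ = ‖g (⟨y, hyY⟩ : Y)‖ := by rw [hval, Real.norm_eq_abs]
            _ ≤ ‖g‖ * ‖y‖ := hle
        have hεC : ε * C ≤ δ := by
          have hεle : ε ≤ δ / C := min_le_left _ _
          calc ε * C ≤ (δ / C) * C := by gcongr
            _ = δ := div_mul_cancel₀ _ hC.ne'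
        have hgnn : (0 : ℝ) ≤ ‖g‖ := ContinuousLinearMap.opNorm_nonneg _
        have hyn : 0 ≤ ‖y‖ := norm_nonneg _
        nlinarith [mul_le_mul_of_nonneg_left hny hgnn, norm_nonneg z, abs_nonneg (f₁ z),
          mul_nonneg hε.le (norm_nonneg z), mul_nonneg hε.le (abs_nonneg (f₁ z))]
      have hgn : ‖g‖ = 1 := le_antisymm hgle hgge
      obtain ⟨F, _, hFu⟩ := h Y hYc g
      set ι := inclusionInDoubleDualLi ℝ (E := StrongDual ℝ X) with hιdef
      have hι : ∀ (u : StrongDual ℝ X) (Φ : StrongDual ℝ (StrongDual ℝ X)), ι u Φ = Φ u := fun u Φ => rfl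
      have e1 : (ι f₁ : StrongDual ℝ (StrongDual ℝ (StrongDual ℝ X))) = F := by
        refine hFu _ ⟨fun y => ?_, ?_⟩
        · rw [hι, dual_def, hgapp]
        · rw [ι.norm_map, h1, hgn]
      have e2 : (ι f₂ : StrongDual ℝ (StrongDual ℝ (StrongDual ℝ X))) = F := by
        refine hFu _ ⟨fun y => ?_, ?_⟩
        · rw [hι, dual_def, hy2]
        · rw [ι.norm_map, h2, hgn]
      exact hne (ι.injective (e1.trans e2.symm))
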